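/- The set W = {x ∈ (0,1) : x irrational and a_n ≥ n·log n for infinitely many n} has full Lebesgue measure in (0,1), where a_n are the partial quotients of x. -/

import Mathlib

open Filter MeasureTheory Real Topology

/-- The Gauss map `x ↦ {1/x}`. -/
noncomputable def gaussMap (x : ℝ) : ℝ := Int.fract x⁻¹

/-- `partQuot x n` is the `n`-th partial quotient `aₙ` of the regular continued fraction
expansion `x = [a₁, a₂, …]` of `x ∈ (0,1)` (meaningful for `n ≥ 1`). -/
noncomputable def partQuot (x : ℝ) (n : ℕ) : ℕ := (⌊(gaussMap^[n - 1] x)⁻¹⌋).toNat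

/-- `cfQ x n` is the denominator `qₙ` of the `n`-th continued fraction convergent
`pₙ/qₙ = [a₁, …, aₙ]` of `x`, given by `q₀ = 1`, `q₁ = a₁`, `qₙ = aₙ qₙ₋₁ + qₙ₋₂`. -/
noncomputable def cfQ (x : ℝ) : ℕ → ℤ
  | 0 => 1
  | 1 => partQuot x 1
  | (n + 2) => partQuot x (n + 2) * cfQ x (n + 1) + cfQ x n

/-- `cfP x n` is the numerator `pₙ` of the `n`-th continued fraction convergent of `x`,
given by `p₀ = 0`, `p₁ = 1`, `pₙ = aₙ pₙ₋₁ + pₙ₋₂`. -/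
noncomputable def cfP (x : ℝ) : ℕ → ℤ
  | 0 => 0
  | 1 => 1
  | (n + 2) => partQuot x (n + 2) * cfP x (n + 1) + cfP x n

namespace BB

def I0 : Set ℝ := {x | x ∈ Set.Ioo (0:ℝ) 1 ∧ Irrational x}

noncomputable def mats : List ℕ → ℝ × ℝ × ℝ × ℝ
  | [] => (1, 0, 0, 1)
  | a :: w => ((mats w).2.2.1, (mats w).2.2.2,
      (mats w).1 + a * (mats w).2.2.1, (mats w).2.1 + a * (mats w).2.2.2)

noncomputable def psi (w : List ℕ) (t : ℝ) : ℝ :=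
  ((mats w).1 * t + (mats w).2.1) / ((mats w).2.2.1 * t + (mats w).2.2.2)

noncomputable def len (w : List ℕ) : ℝ :=
  1 / ((mats w).2.2.2 * ((mats w).2.2.1 + (mats w).2.2.2))


lemma mats_pos (w : List ℕ) (hw : ∀ a ∈ w, 1 ≤ a) :
    0 ≤ (mats w).1 ∧ 0 ≤ (mats w).2.1 ∧ 0 ≤ (mats w).2.2.1 ∧ 1 ≤ (mats w).2.2.2 := by
  induction w with
  | nil => norm_num [mats]
  | cons a w ih =>
      have ha : 1 ≤ a := hw a List.mem_cons_self
      have ih' := ih (fun b hb => hw b (List.mem_cons_of_mem a hb))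
      obtain ⟨h1, h2, h3, h4⟩ := ih'
      have haR : (1:ℝ) ≤ (a:ℝ) := by exact_mod_cast ha
      simp only [mats]
      refine ⟨by linarith, by linarith, by nlinarith, by nlinarith⟩

lemma mats_det (w : List ℕ) :
    (mats w).1 * (mats w).2.2.2 - (mats w).2.1 * (mats w).2.2.1 = 1 ∨
    (mats w).1 * (mats w).2.2.2 - (mats w).2.1 * (mats w).2.2.1 = -1 := by
  induction w with
  | nil => left; norm_num [mats]
  | cons a w ih =>
      rcases ih with h | h
      · right; simp only [mats]; nlinarith
      · left; simp only [mats]; nlinarith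

lemma mats_append (w : List ℕ) (b : ℕ) :
    mats (w ++ [b]) = ((mats w).2.1, (mats w).1 + b * (mats w).2.1,
      (mats w).2.2.2, (mats w).2.2.1 + b * (mats w).2.2.2) := by
  induction w with
  | nil => simp [mats]
  | cons a w ih =>
      show mats (a :: (w ++ [b])) = _
      simp only [mats, ih]
      ring_nf


lemma den_pos (w : List ℕ) (hw : ∀ a ∈ w, 1 ≤ a) {t : ℝ} (ht : 0 ≤ t) :
    0 < (mats w).2.2.1 * t + (mats w).2.2.2 := by
  obtain ⟨hA, hB, hC, hD⟩ := mats_pos w hw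
  nlinarith

lemma psi_nonneg (w : List ℕ) (hw : ∀ a ∈ w, 1 ≤ a) {t : ℝ} (ht : 0 ≤ t) :
    0 ≤ psi w t := by
  obtain ⟨hA, hB, hC, hD⟩ := mats_pos w hw
  have := den_pos w hw ht
  exact div_nonneg (by nlinarith) this.le

lemma psi_diff (w : List ℕ) (hw : ∀ a ∈ w, 1 ≤ a) {u v : ℝ} (hu : 0 ≤ u) (hv : 0 ≤ v) :
    psi w v - psi w u =
      ((mats w).1 * (mats w).2.2.2 - (mats w).2.1 * (mats w).2.2.1) * (v - u) /
        (((mats w).2.2.1 * u + (mats w).2.2.2) * ((mats w).2.2.1 * v + (mats w).2.2.2)) := by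
  have h1 := den_pos w hw hu
  have h2 := den_pos w hw hv
  unfold psi
  rw [div_sub_div _ _ h2.ne' h1.ne', div_eq_div_iff (mul_ne_zero h2.ne' h1.ne') (mul_pos h1 h2).ne']
  ring

lemma psi_abs_diff (w : List ℕ) (hw : ∀ a ∈ w, 1 ≤ a) {u v : ℝ} (hu : 0 ≤ u) (hv : 0 ≤ v) :
    |psi w v - psi w u| = |v - u| /
      (((mats w).2.2.1 * u + (mats w).2.2.2) * ((mats w).2.2.1 * v + (mats w).2.2.2)) := by
  have h1 := den_pos w hw hu
  have h2 := den_pos w hw hv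
  rw [psi_diff w hw hu hv, abs_div, abs_mul, abs_of_pos (mul_pos h1 h2)]
  rcases mats_det w with h | h <;> rw [h] <;> simp

lemma psi_between (w : List ℕ) (hw : ∀ a ∈ w, 1 ≤ a) {t : ℝ} (h0 : 0 ≤ t) (h1 : t ≤ 1) :
    psi w t ∈ Set.Icc (min (psi w 0) (psi w 1)) (max (psi w 0) (psi w 1)) := by
  have d1 := psi_diff w hw (le_refl (0:ℝ)) h0
  have d2 := psi_diff w hw h0 (le_trans h0 h1 : (0:ℝ) ≤ 1)
  have p1 := den_pos w hw (le_refl (0:ℝ))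
  have p2 := den_pos w hw h0
  have p3 := den_pos w hw (le_trans h0 h1 : (0:ℝ) ≤ 1)
  rcases mats_det w with h | h
  · rw [h] at d1 d2
    have e1 : 0 ≤ psi w t - psi w 0 := by
      rw [d1]; exact div_nonneg (by linarith) (mul_pos p1 p2).le
    have e2 : 0 ≤ psi w 1 - psi w t := by
      rw [d2]; exact div_nonneg (by linarith) (mul_pos p2 p3).le
    constructor
    · exact le_trans (min_le_left _ _) (by linarith)
    · exact le_trans (by linarith) (le_max_right _ _)
  · rw [h] at d1 d2
    have e1 : psi w t - psi w 0 ≤ 0 := by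
      rw [d1]
      exact div_nonpos_of_nonpos_of_nonneg (by nlinarith) (mul_pos p1 p2).le
    have e2 : psi w 1 - psi w t ≤ 0 := by
      rw [d2]
      exact div_nonpos_of_nonpos_of_nonneg (by nlinarith) (mul_pos p2 p3).le
    constructor
    · exact le_trans (min_le_right _ _) (by linarith)
    · exact le_trans (by linarith) (le_max_left _ _)

lemma psi_cons (w : List ℕ) (hw : ∀ a ∈ w, 1 ≤ a) (a : ℕ) (ha : 1 ≤ a) {t : ℝ} (ht : 0 ≤ t) :
    psi (a :: w) t = 1 / ((a : ℝ) + psi w t) := by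
  have hp := psi_nonneg w hw ht
  have hd := den_pos w hw ht
  have haR : (1:ℝ) ≤ (a:ℝ) := by exact_mod_cast ha
  have hden : 0 < (a : ℝ) + psi w t := by linarith
  show ((mats w).2.2.1 * t + (mats w).2.2.2) /
      (((mats w).1 + a * (mats w).2.2.1) * t + ((mats w).2.1 + a * (mats w).2.2.2)) = _
  rw [psi] at hp hden ⊢
  field_simp
  ring


lemma gauss_step {x : ℝ} (hx : x ∈ I0) :
    1 ≤ partQuot x 1 ∧ gaussMap x ∈ I0 ∧
      x = 1 / ((partQuot x 1 : ℝ) + gaussMap x) := by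
  obtain ⟨⟨hx0, hx1⟩, hirr⟩ := hx
  have hinv1 : 1 < x⁻¹ := (one_lt_inv_iff₀).2 ⟨hx0, hx1⟩
  have hfl1 : 1 ≤ ⌊x⁻¹⌋ := by
    rw [Int.le_floor]; exact_mod_cast hinv1.le
  have hinvirr : Irrational x⁻¹ := hirr.inv
  have hfr0 : Int.fract x⁻¹ ≠ 0 := by
    intro h
    have : x⁻¹ = (⌊x⁻¹⌋ : ℝ) := by
      have := Int.fract_add_floor x⁻¹
      rw [h] at this; linarith
    exact (hinvirr.ne_int ⌊x⁻¹⌋) this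
  have hfr : Int.fract x⁻¹ ∈ Set.Ioo (0:ℝ) 1 :=
    ⟨lt_of_le_of_ne (Int.fract_nonneg _) (Ne.symm hfr0), Int.fract_lt_one _⟩
  have hq1 : partQuot x 1 = (⌊x⁻¹⌋).toNat := by
    simp [partQuot]
  have hqcast : ((partQuot x 1 : ℕ) : ℝ) = (⌊x⁻¹⌋ : ℝ) := by
    rw [hq1]
    exact_mod_cast congrArg (Int.cast : ℤ → ℝ) (Int.toNat_of_nonneg (by linarith))
  refine ⟨?_, ⟨hfr, ?_⟩, ?_⟩
  · rw [hq1]; omega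
  · show Irrational (Int.fract x⁻¹)
    unfold Int.fract
    exact Irrational.sub_intCast hinvirr _
  · show x = 1 / ((partQuot x 1 : ℝ) + gaussMap x)
    rw [hqcast]
    show x = 1 / ((⌊x⁻¹⌋ : ℝ) + Int.fract x⁻¹)
    rw [Int.floor_add_fract]
    rw [one_div, inv_inv]

lemma iter_mem {x : ℝ} (hx : x ∈ I0) (n : ℕ) : gaussMap^[n] x ∈ I0 := by
  induction n with
  | zero => simpa using hx
  | succ n ih =>
      rw [Function.iterate_succ_apply']
      exact (gauss_step ih).2.1

lemma partQuot_eq (x : ℝ) (n : ℕ) : partQuot x (n + 1) = (⌊(gaussMap^[n] x)⁻¹⌋).toNat := by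
  simp [partQuot]

lemma partQuot_shift (x : ℝ) (n : ℕ) : partQuot x (n + 2) = partQuot (gaussMap x) (n + 1) := by
  rw [partQuot_eq, partQuot_eq, Function.iterate_succ_apply]

lemma partQuot_pos {x : ℝ} (hx : x ∈ I0) (n : ℕ) : 1 ≤ partQuot x (n + 1) := by
  have h := (gauss_step (iter_mem hx n)).1
  rw [partQuot_eq] at h
  simp only [Function.iterate_zero_apply] at h
  rwa [partQuot_eq]
  

def Cyl (w : List ℕ) : Set ℝ :=
  {x | x ∈ I0 ∧ ∀ i < w.length, partQuot x (i + 1) = w.getD i 0}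

lemma rep (w : List ℕ) (hw : ∀ a ∈ w, 1 ≤ a) : ∀ {x : ℝ}, x ∈ Cyl w →
    x = psi w (gaussMap^[w.length] x) := by
  induction w with
  | nil =>
      intro x hx
      simp [psi, mats]
  | cons a w ih =>
      intro x hx
      obtain ⟨hxI, hdig⟩ := hx
      obtain ⟨h1, hT, heq⟩ := gauss_step hxI
      have hw' : ∀ b ∈ w, 1 ≤ b := fun b hb => hw b (List.mem_cons_of_mem a hb)
      have ha : partQuot x 1 = a := by
        have := hdig 0 (by simp)
        simpa using this
      have hTC : gaussMap x ∈ Cyl w := by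
        refine ⟨hT, fun i hi => ?_⟩
        have h2 := hdig (i + 1) (by simpa using Nat.succ_lt_succ hi)
        rw [show i + 1 + 1 = i + 2 from rfl, partQuot_shift] at h2
        simpa using h2
      have hIH := ih hw' hTC
      have hlen : (a :: w).length = w.length + 1 := rfl
      have hiter : gaussMap^[w.length] (gaussMap x) = gaussMap^[w.length + 1] x := by
        rw [Function.iterate_succ_apply]
      rw [hiter] at hIH
      have ht0 : (0:ℝ) ≤ gaussMap^[w.length + 1] x := (iter_mem hxI (w.length + 1)).1.1.le
      rw [hlen, psi_cons w hw' a (hw a List.mem_cons_self) ht0, ← hIH, ← ha]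
      exact heq

lemma len_nonneg (w : List ℕ) (hw : ∀ a ∈ w, 1 ≤ a) : 0 ≤ len w := by
  obtain ⟨hA, hB, hC, hD⟩ := mats_pos w hw
  have : 0 < (mats w).2.2.2 * ((mats w).2.2.1 + (mats w).2.2.2) := by nlinarith
  unfold len
  positivity

lemma cyl_vol (w : List ℕ) (hw : ∀ a ∈ w, 1 ≤ a) :
    volume (Cyl w) ≤ ENNReal.ofReal (len w) := by
  have hsub : Cyl w ⊆ Set.Icc (min (psi w 0) (psi w 1)) (max (psi w 0) (psi w 1)) := by
    intro x hx
    have hx' := rep w hw hx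
    have ht := iter_mem hx.1 w.length
    rw [hx']
    exact psi_between w hw ht.1.1.le ht.1.2.le
  refine le_trans (measure_mono hsub) ?_
  rw [Real.volume_Icc]
  apply le_of_eq
  congr 1
  rw [max_sub_min_eq_abs]
  have := psi_abs_diff w hw (le_refl (0:ℝ)) (zero_le_one)
  rw [this]
  unfold len
  norm_num

lemma len_append (w : List ℕ) (b : ℕ) :
    len (w ++ [b]) = 1 / (((mats w).2.2.1 + b * (mats w).2.2.2) *
      ((mats w).2.2.1 + ((b : ℝ) + 1) * (mats w).2.2.2)) := by
  rw [len, mats_append]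
  push_cast
  ring_nf

noncomputable def fac (k : ℕ) : ℝ := if k = 0 then 1 else 1 - 1 / k

lemma fac_nonneg (k : ℕ) : 0 ≤ fac k := by
  unfold fac
  split
  · norm_num
  · rename_i h
    have : (1:ℝ) ≤ (k:ℝ) := by exact_mod_cast Nat.one_le_iff_ne_zero.2 h
    have : 1 / (k:ℝ) ≤ 1 := by
      rw [div_le_one (by linarith)]; linarith
    linarith

lemma tel_sum (C D : ℝ) (hC : 0 ≤ C) (hD : 1 ≤ D) (m : ℕ) :
    ∑ b ∈ Finset.Icc 1 m, 1 / ((C + b * D) * (C + ((b : ℝ) + 1) * D))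
      = 1 / D * (1 / (C + D) - 1 / (C + ((m : ℝ) + 1) * D)) := by
  induction m with
  | zero => norm_num
  | succ m ih =>
      rw [← Finset.Ico_add_one_right_eq_Icc, Finset.sum_Ico_succ_top (by omega), Finset.Ico_add_one_right_eq_Icc, ih]
      have hm : (0:ℝ) ≤ (m:ℝ) := Nat.cast_nonneg m
      have h0 : (0:ℝ) < D := by linarith
      have h1 : 0 < C + D := by linarith
      have h2 : 0 < C + ((m:ℝ) + 1) * D := by nlinarith
      have h3 : 0 < C + ((m:ℝ) + 1 + 1) * D := by nlinarith
      push_cast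
      field_simp
      ring

lemma tel_bound (w : List ℕ) (hw : ∀ a ∈ w, 1 ≤ a) (K : ℕ) (s : Finset ℕ)
    (hs : ∀ b ∈ s, 1 ≤ b ∧ (K ≠ 0 → b < K)) :
    ∑ b ∈ s, len (w ++ [b]) ≤ fac K * len w := by
  obtain ⟨hA, hB, hC, hD⟩ := mats_pos w hw
  set C := (mats w).2.2.1 with hCdef
  set D := (mats w).2.2.2 with hDdef
  have hterm : ∀ b : ℕ, 1 ≤ b → 0 ≤ len (w ++ [b]) := by
    intro b hb
    rw [len_append]
    have hb1 : (1:ℝ) ≤ (b:ℝ) := by exact_mod_cast hb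
    have hbD : (1:ℝ) * 1 ≤ (b:ℝ) * D := by
      apply mul_le_mul hb1 hD (by norm_num) (by linarith)
    have : 0 < (C + (b:ℝ) * D) * (C + ((b:ℝ) + 1) * D) := by
      apply mul_pos (by linarith) (by nlinarith)
    positivity
  set m : ℕ := if K = 0 then s.sup id else K - 1 with hm
  have hsub : s ⊆ Finset.Icc 1 m := by
    intro b hb
    obtain ⟨hb1, hb2⟩ := hs b hb
    rw [Finset.mem_Icc]
    refine ⟨hb1, ?_⟩
    by_cases hK : K = 0
    · simp only [hm, hK, if_pos]
      exact Finset.le_sup (f := id) hb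
    · simp only [hm, if_neg hK]
      omega
  have h1 : ∑ b ∈ s, len (w ++ [b]) ≤ ∑ b ∈ Finset.Icc 1 m, len (w ++ [b]) := by
    apply Finset.sum_le_sum_of_subset_of_nonneg hsub
    intro b hb _
    exact hterm b (Finset.mem_Icc.1 hb).1
  refine le_trans h1 ?_
  have h2 : ∑ b ∈ Finset.Icc 1 m, len (w ++ [b])
      = 1 / D * (1 / (C + D) - 1 / (C + ((m : ℝ) + 1) * D)) := by
    rw [← tel_sum C D hC hD m]
    apply Finset.sum_congr rfl
    intro b _
    rw [len_append]
  rw [h2]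
  have hDpos : (0:ℝ) < D := by linarith
  have hCD : (0:ℝ) < C + D := by linarith
  have hmD : (0:ℝ) < C + ((m : ℝ) + 1) * D := by
    have : (0:ℝ) ≤ (m:ℝ) := Nat.cast_nonneg m
    nlinarith
  have elen : len w = 1 / (D * (C + D)) := rfl
  by_cases hK : K = 0
  · rw [fac, if_pos hK, elen, one_mul]
    have h3 : 0 ≤ 1 / (C + ((m : ℝ) + 1) * D) := by positivity
    have h4 : 1 / D * (1 / (C + D) - 1 / (C + ((m:ℝ) + 1) * D)) ≤ 1 / D * (1 / (C + D)) := by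
      apply mul_le_mul_of_nonneg_left (by linarith) (by positivity)
    exact le_trans h4 (le_of_eq (one_div_mul_one_div D (C + D)))
  · rw [fac, if_neg hK]
    have hK1 : 1 ≤ K := Nat.one_le_iff_ne_zero.2 hK
    have hKR : (1:ℝ) ≤ (K:ℝ) := by exact_mod_cast hK1
    have hKpos : (0:ℝ) < (K:ℝ) := by linarith
    have hmK : (m : ℝ) + 1 = (K : ℝ) := by
      simp only [hm, if_neg hK]
      have : (K - 1 : ℕ) + 1 = K := by omega
      exact_mod_cast congrArg (Nat.cast : ℕ → ℝ) this
    rw [hmK]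
    have hKD : (0:ℝ) < C + (K:ℝ) * D := by nlinarith
    have e1 : 1 / D * (1 / (C + D) - 1 / (C + (K:ℝ) * D))
        = ((K:ℝ) - 1) / ((C + D) * (C + (K:ℝ) * D)) := by
      field_simp
      ring
    have e2 : (1 - 1 / (K:ℝ)) * len w = ((K:ℝ) - 1) / ((K:ℝ) * (D * (C + D))) := by
      rw [elen]
      field_simp
    rw [e1, e2]
    apply div_le_div_of_nonneg_left (by linarith) (by positivity) (by nlinarith)


lemma getD_append_lt (w : List ℕ) (b : ℕ) (i : ℕ) (h : i < w.length) :
    (w ++ [b]).getD i 0 = w.getD i 0 := by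
  rw [List.getD_append _ _ _ _ h]

lemma getD_append_self (w : List ℕ) (b : ℕ) :
    (w ++ [b]).getD w.length 0 = b := by
  rw [List.getD_append_right _ _ _ _ le_rfl]
  simp

lemma key : ∀ (j : ℕ) (w : List ℕ), (∀ a ∈ w, 1 ≤ a) → ∀ (k : ℕ → ℕ),
    volume {x | x ∈ Cyl w ∧ ∀ i < j, k i ≠ 0 → partQuot x (w.length + 1 + i) < k i}
      ≤ ENNReal.ofReal ((∏ i ∈ Finset.range j, fac (k i)) * len w) := by
  intro j
  induction j with
  | zero =>
      intro w hw k
      simp only [Finset.range_zero, Finset.prod_empty, one_mul]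
      refine le_trans (measure_mono ?_) (cyl_vol w hw)
      intro x hx
      exact hx.1
  | succ j ih =>
      intro w hw k
      set P' : ℝ := ∏ i ∈ Finset.range j, fac (k (i + 1)) with hP'
      have hP'0 : 0 ≤ P' := Finset.prod_nonneg (fun i _ => fac_nonneg _)
      set T : ℕ → Set ℝ := fun b =>
        {x | x ∈ Cyl (w ++ [b]) ∧ 1 ≤ b ∧ (k 0 ≠ 0 → b < k 0) ∧
          ∀ i < j, k (i + 1) ≠ 0 →
            partQuot x ((w ++ [b]).length + 1 + i) < k (i + 1)} with hTdef
      have hsub : {x | x ∈ Cyl w ∧ ∀ i < j + 1, k i ≠ 0 →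
          partQuot x (w.length + 1 + i) < k i} ⊆ ⋃ b, T b := by
        intro x hx
        obtain ⟨hx1, hx2⟩ := hx
        set b := partQuot x (w.length + 1) with hb
        have hb1 : 1 ≤ b := partQuot_pos hx1.1 w.length
        refine Set.mem_iUnion.2 ⟨b, ?_, hb1, ?_, ?_⟩
        · refine ⟨hx1.1, fun i hi => ?_⟩
          rw [List.length_append, List.length_cons, List.length_nil] at hi
          rcases Nat.lt_or_ge i w.length with h | h
          · rw [getD_append_lt w b i h]
            exact hx1.2 i h
          · have hiw : i = w.length := by omega
            rw [hiw, getD_append_self]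
        · intro hk0
          have := hx2 0 (by omega) hk0
          simpa using this
        · intro i hi hki
          have h2 := hx2 (i + 1) (by omega) hki
          have hidx : (w ++ [b]).length + 1 + i = w.length + 1 + (i + 1) := by
            simp [List.length_append]
            omega
          rw [hidx]
          exact h2
      refine le_trans (measure_mono hsub) (le_trans (measure_iUnion_le (F := Measure ℝ) (μ := volume) T) ?_)
      have hvol : ∀ b : ℕ, volume (T b) ≤
          ENNReal.ofReal (if 1 ≤ b ∧ (k 0 ≠ 0 → b < k 0) then P' * len (w ++ [b]) else 0) := by
        intro b
        by_cases hgood : 1 ≤ b ∧ (k 0 ≠ 0 → b < k 0)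
        · rw [if_pos hgood]
          have hw' : ∀ a ∈ w ++ [b], 1 ≤ a := by
            intro a ha
            rcases List.mem_append.1 ha with h | h
            · exact hw a h
            · simp at h
              omega
          have hsub2 : T b ⊆ {x | x ∈ Cyl (w ++ [b]) ∧ ∀ i < j, (fun i => k (i + 1)) i ≠ 0 →
              partQuot x ((w ++ [b]).length + 1 + i) < (fun i => k (i + 1)) i} := by
            intro x hx
            exact ⟨hx.1, hx.2.2.2⟩
          exact le_trans (measure_mono hsub2) (ih (w ++ [b]) hw' (fun i => k (i + 1)))
        · rw [if_neg hgood]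
          have : T b ⊆ ∅ := by
            intro x hx
            exact absurd ⟨hx.2.1, hx.2.2.1⟩ hgood
          have h1 : volume (T b) ≤ volume (∅ : Set ℝ) := measure_mono this
          simp only [measure_empty, nonpos_iff_eq_zero] at h1
          rw [h1, ENNReal.ofReal_zero]
      refine le_trans (ENNReal.tsum_le_tsum hvol) ?_
      rw [ENNReal.tsum_eq_iSup_sum]
      refine iSup_le fun s => ?_
      rw [← ENNReal.ofReal_sum_of_nonneg ?nn]
      case nn =>
        intro b _
        split
        · rename_i hgood
          have hw' : ∀ a ∈ w ++ [b], 1 ≤ a := by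
            intro a ha
            rcases List.mem_append.1 ha with h | h
            · exact hw a h
            · simp at h; omega
          exact mul_nonneg hP'0 (len_nonneg _ hw')
        · exact le_refl (0:ℝ)
      apply ENNReal.ofReal_le_ofReal
      have hfilter : (∑ b ∈ s, if 1 ≤ b ∧ (k 0 ≠ 0 → b < k 0) then P' * len (w ++ [b]) else 0)
          = ∑ b ∈ s.filter (fun b => 1 ≤ b ∧ (k 0 ≠ 0 → b < k 0)), P' * len (w ++ [b]) := by
        rw [Finset.sum_filter]
      rw [hfilter, ← Finset.mul_sum]
      have htel := tel_bound w hw (k 0) (s.filter (fun b => 1 ≤ b ∧ (k 0 ≠ 0 → b < k 0)))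
        (fun b hb => (Finset.mem_filter.1 hb).2)
      have hprod : (∏ i ∈ Finset.range (j + 1), fac (k i)) = P' * fac (k 0) := by
        rw [Finset.prod_range_succ']
      calc P' * ∑ b ∈ s.filter (fun b => 1 ≤ b ∧ (k 0 ≠ 0 → b < k 0)), len (w ++ [b])
          ≤ P' * (fac (k 0) * len w) := mul_le_mul_of_nonneg_left htel hP'0
        _ = (∏ i ∈ Finset.range (j + 1), fac (k i)) * len w := by rw [hprod]; ring


lemma len_nil : len ([] : List ℕ) = 1 := by
  norm_num [len, mats]

lemma not_summable_aux :
    ¬ Summable (fun n : ℕ => 1 / ((n : ℝ) * Real.log ((n : ℝ) + 2))) := by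
  intro hs
  have hlog2 : (0:ℝ) < Real.log 2 := Real.log_pos (by norm_num)
  have hnonneg : ∀ n : ℕ, 0 ≤ 1 / ((n:ℝ) * Real.log ((n:ℝ) + 2)) := by
    intro n
    have h1 : 0 ≤ Real.log ((n:ℝ) + 2) := Real.log_nonneg (by
      have : (0:ℝ) ≤ (n:ℝ) := Nat.cast_nonneg n
      linarith)
    have h2 : (0:ℝ) ≤ (n:ℝ) := Nat.cast_nonneg n
    positivity
  have hanti : ∀ ⦃m n : ℕ⦄, 0 < m → m ≤ n →
      1 / ((n:ℝ) * Real.log ((n:ℝ) + 2)) ≤ 1 / ((m:ℝ) * Real.log ((m:ℝ) + 2)) := by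
    intro m n hm hmn
    have hmR : (1:ℝ) ≤ (m:ℝ) := by exact_mod_cast hm
    have hmnR : (m:ℝ) ≤ (n:ℝ) := by exact_mod_cast hmn
    have hlm : 0 < Real.log ((m:ℝ) + 2) := Real.log_pos (by linarith)
    have hln : Real.log ((m:ℝ) + 2) ≤ Real.log ((n:ℝ) + 2) :=
      Real.log_le_log (by linarith) (by linarith)
    apply one_div_le_one_div_of_le
    · nlinarith
    · nlinarith
  have hcond := (summable_condensed_iff_of_nonneg hnonneg hanti).2 hs
  have hcond' : Summable (fun k : ℕ => 1 / Real.log ((2:ℝ) ^ k + 2)) := by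
    refine hcond.congr fun k => ?_
    have h2k : (0:ℝ) < (2:ℝ) ^ k := by positivity
    have hcast : ((2 ^ k : ℕ) : ℝ) = (2:ℝ) ^ k := by push_cast; ring
    rw [hcast, mul_one_div, div_mul_eq_div_div, div_self (ne_of_gt h2k)]
  have hsum2 : Summable (fun k : ℕ => 1 / (((k:ℝ) + 2) * Real.log 2)) := by
    refine Summable.of_nonneg_of_le (fun k => by positivity) (fun k => ?_) hcond'
    have h2k1 : (1:ℝ) ≤ (2:ℝ) ^ k := one_le_pow₀ (by norm_num)
    have hle : (2:ℝ) ^ k + 2 ≤ (2:ℝ) ^ (k + 2) := by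
      rw [pow_add]
      norm_num
      nlinarith
    have hlog_le : Real.log ((2:ℝ) ^ k + 2) ≤ ((k:ℝ) + 2) * Real.log 2 := by
      calc Real.log ((2:ℝ) ^ k + 2) ≤ Real.log ((2:ℝ) ^ (k + 2)) :=
            Real.log_le_log (by linarith) hle
        _ = ((k:ℝ) + 2) * Real.log 2 := by
            rw [Real.log_pow]; push_cast; ring
    have hpos : 0 < Real.log ((2:ℝ) ^ k + 2) := Real.log_pos (by nlinarith)
    exact one_div_le_one_div_of_le hpos hlog_le
  have hsum3 : Summable (fun k : ℕ => 1 / ((k:ℝ) + 2)) := by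
    have := hsum2.mul_left (Real.log 2)
    refine this.congr fun k => ?_
    have : (0:ℝ) < (k:ℝ) + 2 := by positivity
    field_simp
  have hsum4 : Summable (fun k : ℕ => 1 / ((k:ℝ) : ℝ)) := by
    rw [← summable_nat_add_iff 2]
    refine hsum3.congr fun k => ?_
    push_cast
    ring_nf
  exact Real.not_summable_one_div_natCast hsum4

noncomputable def kf (N : ℕ) (i : ℕ) : ℕ :=
  if i < N then 0 else ⌈((i:ℝ) + 1) * Real.log ((i:ℝ) + 1)⌉₊

noncomputable def gf (N : ℕ) (i : ℕ) : ℝ :=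
  if kf N i = 0 then 0 else 1 / (kf N i : ℝ)

lemma fac_le_exp (m : ℕ) : fac m ≤ Real.exp (-(if m = 0 then 0 else 1 / (m:ℝ))) := by
  unfold fac
  split
  · simp
  · rename_i h
    have := Real.add_one_le_exp (-(1 / (m:ℝ)))
    linarith

lemma gf_nonneg (N i : ℕ) : 0 ≤ gf N i := by
  unfold gf
  split
  · exact le_refl (0:ℝ)
  · positivity


lemma gf_ge (N : ℕ) (i : ℕ) (hi : max N 3 ≤ i) :
    (1/2) * (1 / (((i:ℝ) + 1) * Real.log ((i:ℝ) + 3))) ≤ gf N i := by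
  have hiN : ¬ i < N := by omega
  have hi3 : 3 ≤ i := le_trans (le_max_right N 3) hi
  have hiR : (3:ℝ) ≤ (i:ℝ) := by exact_mod_cast hi3
  set c : ℝ := ((i:ℝ) + 1) * Real.log ((i:ℝ) + 1) with hc
  have hlog1 : (1:ℝ) < Real.log ((i:ℝ) + 1) := by
    rw [Real.lt_log_iff_exp_lt (by linarith)]
    have := Real.exp_one_lt_d9
    linarith
  have hc1 : (1:ℝ) ≤ c := by nlinarith
  have hkf : kf N i = ⌈c⌉₊ := by rw [kf, if_neg hiN]
  have hceil_pos : 0 < ⌈c⌉₊ := Nat.ceil_pos.2 (by linarith)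
  have hkf0 : kf N i ≠ 0 := by rw [hkf]; omega
  rw [gf, if_neg hkf0, hkf]
  have hceil_le : (⌈c⌉₊ : ℝ) ≤ 2 * c := by
    have h1 : (⌈c⌉₊ : ℝ) < c + 1 := Nat.ceil_lt_add_one (by linarith)
    linarith
  have hlog_le : Real.log ((i:ℝ) + 1) ≤ Real.log ((i:ℝ) + 3) :=
    Real.log_le_log (by linarith) (by linarith)
  have h2c : 2 * c ≤ 2 * (((i:ℝ) + 1) * Real.log ((i:ℝ) + 3)) := by
    rw [hc]
    nlinarith
  have hfin : (⌈c⌉₊ : ℝ) ≤ 2 * (((i:ℝ) + 1) * Real.log ((i:ℝ) + 3)) := le_trans hceil_le h2c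
  have hpos : (0:ℝ) < (⌈c⌉₊ : ℝ) := by exact_mod_cast hceil_pos
  have := one_div_le_one_div_of_le hpos hfin
  calc (1/2) * (1 / (((i:ℝ) + 1) * Real.log ((i:ℝ) + 3)))
      = 1 / (2 * (((i:ℝ) + 1) * Real.log ((i:ℝ) + 3))) := by
        rw [one_div_mul_one_div]
      _ ≤ 1 / (⌈c⌉₊ : ℝ) := this


lemma gf_tendsto (N : ℕ) :
    Tendsto (fun j => ∑ i ∈ Finset.range j, gf N i) atTop atTop := by
  set M := max N 3 with hM
  set u : ℕ → ℝ := fun i => (1/2) * (1 / (((i:ℝ) + 1) * Real.log ((i:ℝ) + 3))) with hu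
  have hu_nonneg : ∀ i, 0 ≤ u i := by
    intro i
    have h2 : (0:ℝ) ≤ (i:ℝ) := Nat.cast_nonneg i
    have h1 : 0 ≤ Real.log ((i:ℝ) + 3) := Real.log_nonneg (by linarith)
    rw [hu]
    positivity
  have hu_not : ¬ Summable u := by
    intro h
    have h2 := h.mul_left 2
    have h3 : Summable (fun i : ℕ => 1 / (((i:ℝ) + 1) * Real.log ((i:ℝ) + 3))) := by
      refine h2.congr fun i => ?_
      rw [hu]
      ring
    have h4 : Summable (fun n : ℕ => 1 / ((n:ℝ) * Real.log ((n:ℝ) + 2))) := by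
      rw [← summable_nat_add_iff 1]
      refine h3.congr fun i => ?_
      push_cast
      ring_nf
    exact not_summable_aux h4
  have hdiv : Tendsto (fun j => ∑ i ∈ Finset.range j, u i) atTop atTop := by
    have := (not_summable_iff_tendsto_nat_atTop_of_nonneg hu_nonneg).1 hu_not
    exact this
  have hmaj : ∀ j, (∑ i ∈ Finset.range j, u i) - (∑ i ∈ Finset.range M, u i)
      ≤ ∑ i ∈ Finset.range j, gf N i := by
    intro j
    have hsplit := Finset.sum_filter_add_sum_filter_not (Finset.range j) (fun i => i < M) u
    have ha : ∑ i ∈ (Finset.range j).filter (fun i => i < M), u i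
        ≤ ∑ i ∈ Finset.range M, u i := by
      apply Finset.sum_le_sum_of_subset_of_nonneg
      · intro b hb
        simp only [Finset.mem_filter, Finset.mem_range] at hb ⊢
        exact hb.2
      · intro b _ _
        exact hu_nonneg b
    have hb : ∑ i ∈ (Finset.range j).filter (fun i => ¬ i < M), u i
        ≤ ∑ i ∈ Finset.range j, gf N i := by
      refine le_trans (Finset.sum_le_sum ?_) (Finset.sum_le_sum_of_subset_of_nonneg
        (Finset.filter_subset _ _) (fun b _ _ => gf_nonneg N b))
      intro i hi
      simp only [Finset.mem_filter, Finset.mem_range] at hi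
      exact gf_ge N i (by omega)
    linarith
  have hC : Tendsto (fun j => (∑ i ∈ Finset.range j, u i) - (∑ i ∈ Finset.range M, u i))
      atTop atTop := tendsto_atTop_add_const_right atTop _ hdiv
  exact tendsto_atTop_mono hmaj hC

def Eset (N : ℕ) : Set ℝ :=
  {x | x ∈ I0 ∧ ∀ m, N < m → (partQuot x m : ℝ) < (m:ℝ) * Real.log m}

lemma Eset_null (N : ℕ) : volume (Eset N) = 0 := by
  have hbound : ∀ j, volume (Eset N)
      ≤ ENNReal.ofReal (Real.exp (-(∑ i ∈ Finset.range j, gf N i))) := by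
    intro j
    have hsubj : Eset N ⊆ {x | x ∈ Cyl [] ∧ ∀ i < j, kf N i ≠ 0 →
        partQuot x (List.length ([] : List ℕ) + 1 + i) < kf N i} := by
      intro x hx
      refine ⟨⟨hx.1, fun i hi => absurd hi (Nat.not_lt_zero i)⟩, ?_⟩
      intro i hi hki
      have hiN : ¬ i < N := by
        intro h
        exact hki (by simp [kf, h])
      have hm := hx.2 (i + 1) (by omega)
      rw [kf, if_neg hiN]
      have hpos : List.length ([] : List ℕ) + 1 + i = i + 1 := by simp; omega
      rw [hpos, Nat.lt_ceil]
      push_cast at hm ⊢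
      exact hm
    have hkey := key j [] (by simp) (kf N)
    refine le_trans (le_trans (measure_mono hsubj) hkey) ?_
    apply ENNReal.ofReal_le_ofReal
    rw [len_nil, mul_one]
    calc (∏ i ∈ Finset.range j, fac (kf N i))
        ≤ ∏ i ∈ Finset.range j, Real.exp (-(gf N i)) := by
          apply Finset.prod_le_prod (fun i _ => fac_nonneg _)
          intro i _
          have := fac_le_exp (kf N i)
          rw [gf]
          exact this
      _ = Real.exp (∑ i ∈ Finset.range j, -(gf N i)) := (Real.exp_sum _ _).symm
      _ = Real.exp (-(∑ i ∈ Finset.range j, gf N i)) := by rw [Finset.sum_neg_distrib]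
  have htend : Tendsto (fun j => ENNReal.ofReal
      (Real.exp (-(∑ i ∈ Finset.range j, gf N i)))) atTop (nhds 0) := by
    have h1 : Tendsto (fun j => -(∑ i ∈ Finset.range j, gf N i)) atTop atBot :=
      tendsto_neg_atTop_atBot.comp (gf_tendsto N)
    have h2 : Tendsto (fun j => Real.exp (-(∑ i ∈ Finset.range j, gf N i))) atTop (nhds 0) :=
      Real.tendsto_exp_atBot.comp h1
    have h3 := (ENNReal.continuous_ofReal.tendsto 0).comp h2
    rw [ENNReal.ofReal_zero] at h3
    exact h3
  have hle : volume (Eset N) ≤ 0 := ge_of_tendsto' htend hbound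
  exact nonpos_iff_eq_zero.1 hle

end BB


/-- The set `W = {x ∈ (0,1) : x` irrational and `aₙ ≥ n·log n` for infinitely many `n}`
has full Lebesgue measure in `(0,1)`. -/
theorem borel_bernstein_infinite :
    volume ((Set.Ioo (0 : ℝ) 1) \
      {x : ℝ | Irrational x ∧
        {n : ℕ | 1 ≤ n ∧ (n : ℝ) * Real.log n ≤ (partQuot x n : ℝ)}.Infinite}) = 0 := by
  have hsub : (Set.Ioo (0 : ℝ) 1) \
      {x : ℝ | Irrational x ∧
        {n : ℕ | 1 ≤ n ∧ (n : ℝ) * Real.log n ≤ (partQuot x n : ℝ)}.Infinite}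
      ⊆ {x : ℝ | ¬ Irrational x} ∪ ⋃ N, BB.Eset N := by
    rintro x ⟨hxI, hxW⟩
    by_cases hirr : Irrational x
    · right
      have hfin : ¬ {n : ℕ | 1 ≤ n ∧ (n : ℝ) * Real.log n ≤ (partQuot x n : ℝ)}.Infinite :=
        fun h => hxW ⟨hirr, h⟩
      rw [Set.not_infinite] at hfin
      obtain ⟨N, hN⟩ := hfin.bddAbove
      refine Set.mem_iUnion.2 ⟨N, ⟨⟨hxI, hirr⟩, ?_⟩⟩
      intro m hm
      by_contra hcon
      push_neg at hcon
      have hmem : m ∈ {n : ℕ | 1 ≤ n ∧ (n : ℝ) * Real.log n ≤ (partQuot x n : ℝ)} :=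
        ⟨by omega, hcon⟩
      have := hN hmem
      omega
    · left
      exact hirr
  apply measure_mono_null hsub
  apply measure_union_null
  · have hrange : {x : ℝ | ¬ Irrational x} = Set.range ((↑) : ℚ → ℝ) := by
      ext x
      simp [Irrational]
    rw [hrange]
    exact (Set.countable_range _).measure_zero _
  · exact measure_iUnion_null BB.Eset_null
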